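/- arXiv:2109.14877 — 4 statements merged into one kernel-verified Lean document; each statement's English description precedes it below -/
import Mathlib

section
/- Let T be a small countable complete first-order theory, let D be a finite subset and B = {b_1, b_2, ..., b_i, ...} a countable subset of a model of T. Then for each satisfiable (B ∪ D)-formula φ(x, b̄_n, d̄), where b̄_n = (b_1, ..., b_n) ∈ B (n < ω) and d̄ ∈ D, there exists a complete 1-type q_φ ∈ S_1(B ∪ D) such that (1) φ(x, b̄_n, d̄) ∈ q_φ, and (2) for every i ≥ n the restriction q_φ ↾ (B_i ∪ D) is principal, where B_i = {b_1, ..., b_i}. -/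
namespace Paper

open FirstOrder FirstOrder.Language Set

universe u v w x y

variable (L : FirstOrder.Language.{u, v})

/-- A theory is *small* if for every `n` it has only countably many complete `n`-types
over the empty set. -/
def IsSmall (T : L.Theory) : Prop := ∀ n : ℕ, Countable (T.CompleteType (Fin n))

section Basic

variable {M : Type w} [L.Structure M]

/-- `M` is ω-saturated: every set of 1-formulas over finitely many parameters that is
finitely satisfiable in `M` is realized in `M`. -/
def OmegaSaturated (M : Type w) [L.Structure M] : Prop :=
  ∀ (k : ℕ) (c : Fin k → M) (S : Set (L.Formula (Fin k ⊕ Fin 1))),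
    (∀ S₀ : Finset (L.Formula (Fin k ⊕ Fin 1)), ↑S₀ ⊆ S →
        ∃ a : M, ∀ φ ∈ S₀, Formula.Realize φ (Sum.elim c fun _ => a)) →
    ∃ a : M, ∀ φ ∈ S, Formula.Realize φ (Sum.elim c fun _ => a)

/-- The complete type of a tuple over the empty parameter set (as a set of formulas). -/
def tp0 {γ : Type*} (a : γ → M) : Set (L.Formula γ) := {φ | φ.Realize a}

/-- The complete type of a tuple `a` over the parameters `c`. -/
def tpT {β γ : Type*} (c : β → M) (a : γ → M) : Set (L.Formula (β ⊕ γ)) :=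
  {φ | φ.Realize (Sum.elim c a)}

/-- The complete 1-type of an element `a` over the parameters `c`. -/
def tp1 {β : Type*} (c : β → M) (a : M) : Set (L.Formula (β ⊕ Fin 1)) :=
  {φ | φ.Realize (Sum.elim c fun _ => a)}

/-- `tp(a/c)` is principal (isolated by a single formula). -/
def IsPrincipalT {β γ : Type*} (c : β → M) (a : γ → M) : Prop :=
  ∃ φ ∈ tpT L c a, ∀ a' : γ → M,
    Formula.Realize φ (Sum.elim c a') → tpT L c a' = tpT L c a

/-- The 1-type `tp(a/c)` is principal. -/
def IsPrincipal1 {β : Type*} (c : β → M) (a : M) : Prop :=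
  ∃ φ ∈ tp1 L c a, ∀ a' : M,
    Formula.Realize φ (Sum.elim c fun _ => a') → tp1 L c a' = tp1 L c a

/-- `g : B → N` is a partial elementary map (this is the meaning of "`B ⊆ N`" for a
subset `B` of another model). -/
def PartialElem {M : Type w} {N : Type x} [L.Structure M] [L.Structure N]
    (B : Set M) (g : B → N) : Prop :=
  ∀ (n : ℕ) (φ : L.Formula (Fin n)) (b : Fin n → B),
    Formula.Realize φ (fun i => (b i : M)) ↔ Formula.Realize φ (fun i => g (b i))

/-- The finite diagram of `M` is contained in the finite diagram of `N`: every complete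
type over `∅` realized in `M` is realized in `N`. -/
def FinDiagSubset (M : Type w) (N : Type x) [L.Structure M] [L.Structure N] : Prop :=
  ∀ (n : ℕ) (a : Fin n → M), ∃ b : Fin n → N, tp0 L a = tp0 L b

/-- The dowry of `B₁` is contained in the dowry of `B₂`. -/
def DowrySubset {M : Type w} [L.Structure M] (B₁ B₂ : Set M) : Prop :=
  ∀ (n : ℕ) (b₁ : Fin n → B₁), ∃ b₂ : Fin n → B₂,
    tp0 L (fun i => (b₁ i : M)) = tp0 L (fun i => (b₂ i : M))

/-- `A` (together with the identification `e` of `B` with a subset of `A`) is a model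
obtained by the construction of Theorem 2 over the countable set `B`: a countable model of
`T` containing `B` in which every finite tuple has a principal type over some finite tuple
from `B` extending any prescribed finite tuple from `B`. -/
def IsConstructedOver (T : L.Theory) {M : Type w} [L.Structure M] (B : Set M)
    (A : Type x) [L.Structure A] (e : B → A) : Prop :=
  Countable A ∧ T.Model A ∧ PartialElem L B e ∧
    ∀ (n : ℕ) (a : Fin n → A) (k₀ : ℕ) (b₀ : Fin k₀ → B),
      ∃ (k : ℕ) (b : Fin k → B), (∀ j, ∃ i, b i = b₀ j) ∧
        IsPrincipalT L (fun i => e (b i)) a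

/-- `N` is a homogeneous structure. -/
def IsHomogeneous (N : Type x) [L.Structure N] : Prop :=
  ∀ (n : ℕ) (a b : Fin n → N), tp0 L a = tp0 L b →
    ∀ c : N, ∃ d : N, tp0 L (Fin.snoc a c) = tp0 L (Fin.snoc b d)

/-- `p ⊥ʷ q`: weak orthogonality of the two types, witnessed inside the (sufficiently
saturated) structure `N`. -/
def WeaklyOrthogonalIn (N : Type x) [L.Structure N] {k m : ℕ}
    (p : Set (L.Formula (Fin k))) (q : Set (L.Formula (Fin m))) : Prop :=
  ∀ (a₁ a₂ : Fin k → N) (b₁ b₂ : Fin m → N),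
    tp0 L a₁ = p → tp0 L a₂ = p → tp0 L b₁ = q → tp0 L b₂ = q →
      tp0 L (Fin.append a₁ b₁) = tp0 L (Fin.append a₂ b₂)

end Basic

/-- `I(T, ℵ₀) = 2^{ℵ₀}`: the theory `T` has continuum many pairwise non-isomorphic
countable models. -/
def HasContinuumManyCountableModels (T : L.Theory) : Prop :=
  ∃ f : Set ℕ → Theory.ModelType.{u, v, max u v} T,
    (∀ s, Countable (f s)) ∧
    ∀ s t : Set ℕ, s ≠ t → IsEmpty ((f s) ≃[L] (f t))

section Ordered

variable {M : Type w} [L.Structure M] [LinearOrder M]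

/-- The set of realizations in `M` of the 1-type `tp(a₀/c)`. -/
def pSet {k : ℕ} (c : Fin k → M) (a₀ : M) : Set M := {x | tp1 L c x = tp1 L c a₀}

/-- `φ(x, y)` holds of `(x, y)` over the parameters `c`. -/
def real2 {k : ℕ} (c : Fin k → M) (φ : L.Formula (Fin k ⊕ Fin 2)) (x y : M) : Prop :=
  Formula.Realize φ (Sum.elim c ![x, y])

/-- `φ(M, α)`, the set defined by `φ(x, α)`. -/
def phiSet {k : ℕ} (c : Fin k → M) (φ : L.Formula (Fin k ⊕ Fin 2)) (α : M) : Set M :=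
  {x | real2 L c φ x α}

/-- `S` is convex in `B`. -/
def ConvexIn {M : Type w} [LinearOrder M] (S B : Set M) : Prop :=
  ∀ a ∈ S, ∀ b ∈ S, ∀ y ∈ B, a ≤ y → y ≤ b → y ∈ S

/-- `φ(x,y)` is a `p`-preserving formula, `p = tp(a₀/c)`. -/
def PPreserving {k : ℕ} (c : Fin k → M) (a₀ : M) (φ : L.Formula (Fin k ⊕ Fin 2)) : Prop :=
  ∃ α ∈ pSet L c a₀, ∃ γ₁ ∈ pSet L c a₀, ∃ γ₂ ∈ pSet L c a₀,
    (pSet L c a₀ ∩ (phiSet L c φ α \ {α})).Nonempty ∧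
    ∀ z ∈ phiSet L c φ α, γ₁ < z ∧ z < γ₂

/-- `φ(x,y)` is convex to the right on `p`. -/
def ConvexRight {k : ℕ} (c : Fin k → M) (a₀ : M) (φ : L.Formula (Fin k ⊕ Fin 2)) : Prop :=
  ∃ α ∈ pSet L c a₀,
    ConvexIn (pSet L c a₀ ∩ phiSet L c φ α) Set.univ ∧
    α ∈ phiSet L c φ α ∧ ∀ z ∈ phiSet L c φ α, α ≤ z

/-- `φ(x,y)` is convex to the left on `p`. -/
def ConvexLeft {k : ℕ} (c : Fin k → M) (a₀ : M) (φ : L.Formula (Fin k ⊕ Fin 2)) : Prop :=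
  ∃ α ∈ pSet L c a₀,
    ConvexIn (pSet L c a₀ ∩ phiSet L c φ α) Set.univ ∧
    α ∈ phiSet L c φ α ∧ ∀ z ∈ phiSet L c φ α, z ≤ α

/-- `φ(x,y)` is a quasi-successor on `p`. -/
def IsQuasiSuccessor {k : ℕ} (c : Fin k → M) (a₀ : M)
    (φ : L.Formula (Fin k ⊕ Fin 2)) : Prop :=
  PPreserving L c a₀ φ ∧ (ConvexRight L c a₀ φ ∨ ConvexLeft L c a₀ φ) ∧
    ∀ α ∈ pSet L c a₀, ∀ β ∈ phiSet L c φ α ∩ pSet L c a₀,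
      (pSet L c a₀ ∩ (phiSet L c φ β \ phiSet L c φ α)).Nonempty

/-- `CRF(p)`: the family of all `p`-preserving convex to the right `A`-formulas. -/
def CRF {k : ℕ} (c : Fin k → M) (a₀ : M) : Set (L.Formula (Fin k ⊕ Fin 2)) :=
  {φ | PPreserving L c a₀ φ ∧ ConvexRight L c a₀ φ}

/-- `CRF(p)` is infinite (up to equivalence on `p`, i.e. infinitely many traces). -/
def CRFInfinite {k : ℕ} (c : Fin k → M) (a₀ : M) : Prop :=
  {g : M → Set M | ∃ φ ∈ CRF L c a₀,
    g = fun α => phiSet L c φ α ∩ pSet L c a₀}.Infinite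

/-- `CRF(p)` has a greatest formula on `p`. -/
def HasGreatestCRF {k : ℕ} (c : Fin k → M) (a₀ : M) : Prop :=
  ∃ φ ∈ CRF L c a₀, ∀ ψ ∈ CRF L c a₀, ∀ α ∈ pSet L c a₀,
    phiSet L c ψ α ∩ pSet L c a₀ ⊆ phiSet L c φ α ∩ pSet L c a₀

/-- `CRF(p)` has a least formula on `p`. -/
def HasLeastCRF {k : ℕ} (c : Fin k → M) (a₀ : M) : Prop :=
  ∃ φ ∈ CRF L c a₀, ∀ ψ ∈ CRF L c a₀, ∀ α ∈ pSet L c a₀,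
    phiSet L c φ α ∩ pSet L c a₀ ⊆ phiSet L c ψ α ∩ pSet L c a₀

/-- `chain n x y` holds iff `x ∈ φⁿ(M, y)` (the `n`-fold iterate of `φ`). -/
def chain {k : ℕ} (c : Fin k → M) (φ : L.Formula (Fin k ⊕ Fin 2)) :
    ℕ → M → M → Prop
  | 0, x, y => x = y
  | n + 1, x, y => ∃ z, chain c φ n z y ∧ real2 L c φ x z

/-- The neighborhood `V_{p,φ}(α)`. -/
def Vnb {k : ℕ} (c : Fin k → M) (a₀ : M) (φ : L.Formula (Fin k ⊕ Fin 2)) (α : M) :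
    Set M :=
  {γ | γ ∈ pSet L c a₀ ∧ ∃ n : ℕ, chain L c φ n γ α ∨ chain L c φ n α γ}

/-- Every element of `S` precedes every element of `S'`. -/
def SetLT {M : Type w} [LinearOrder M] (S S' : Set M) : Prop :=
  ∀ a ∈ S, ∀ b ∈ S', a < b

/-- The set of elements strictly above every member of `S` and strictly below every
member of `S'`. -/
def betweenSets {M : Type w} [LinearOrder M] (S S' : Set M) : Set M :=
  {y | (∀ a ∈ S, a < y) ∧ ∀ b ∈ S', y < b}

/-- The convex closure `φᶜ(M)` of the set defined by a 1-formula `φ` over parameters `c`. -/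
def convCl {β : Type*} (c : β → M) (φ : L.Formula (β ⊕ Fin 1)) : Set M :=
  {y | ∃ y₁ y₂ : M, Formula.Realize φ (Sum.elim c fun _ => y₁) ∧
    Formula.Realize φ (Sum.elim c fun _ => y₂) ∧ y₁ ≤ y ∧ y ≤ y₂}

/-- The convex type `tpᶜ(a/c)`, encoded as the set of 1-formulas `φ` over `c` whose
convex closure contains `a`. -/
def tpc {β : Type*} (c : β → M) (a : M) : Set (L.Formula (β ⊕ Fin 1)) :=
  {φ | a ∈ convCl L c φ}

/-- The set of realizations in `M` of the convex type `tpᶜ(a/c)`. -/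
def tpcRealizers {β : Type*} (c : β → M) (a : M) : Set M :=
  {y | ∀ φ ∈ tp1 L c a, y ∈ convCl L c φ}

/-- `(α, β)` realizes the partial type `q₀(x, y)` associated with the quasi-successor `φ`. -/
def RealizesQ0 {k : ℕ} (c : Fin k → M) (a₀ : M) (φ : L.Formula (Fin k ⊕ Fin 2))
    (α β : M) : Prop :=
  α < β ∧ α ∈ pSet L c a₀ ∧ β ∈ pSet L c a₀ ∧
  (∀ n : ℕ, ¬ chain L c φ n β α) ∧
  (∀ R : L.Formula (Fin k ⊕ Fin 2),
    (PPreserving L c a₀ R ∧ ConvexRight L c a₀ R ∧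
      ∀ n : ℕ, ∀ α' ∈ pSet L c a₀, ∀ γ ∈ pSet L c a₀,
        chain L c φ n γ α' → γ ∈ phiSet L c R α') →
    real2 L c R β α) ∧
  (∀ Lf : L.Formula (Fin k ⊕ Fin 2),
    (PPreserving L c a₀ Lf ∧ ConvexLeft L c a₀ Lf ∧
      ∀ n : ℕ, ∀ β' ∈ pSet L c a₀, ∀ γ ∈ pSet L c a₀,
        chain L c φ n β' γ → γ ∈ phiSet L c Lf β') →
    real2 L c Lf α β)

/-- The neighborhood `V_{p(M)}(α)` built from all of `CRF(p)`. -/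
def VCRF {k : ℕ} (c : Fin k → M) (a₀ : M) (α : M) : Set M :=
  {γ | γ ∈ pSet L c a₀ ∧ ∃ φ ∈ CRF L c a₀, real2 L c φ α γ ∨ real2 L c φ γ α}

/-- `ε_{φ,Θ}(M, α) = (φ(α,·) ∨ φ(·,α)) ∩ Θ(M)`. -/
def epsSet {k : ℕ} (c : Fin k → M) (θ : L.Formula (Fin k ⊕ Fin 1))
    (φ : L.Formula (Fin k ⊕ Fin 2)) (α : M) : Set M :=
  {y | (real2 L c φ α y ∨ real2 L c φ y α) ∧
    Formula.Realize θ (Sum.elim c fun _ => y)}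

/-- `Θ ∈ p` is a formula with `p(M) = pᶜ(M) ∩ Θ(M)`. -/
def ThetaWitness {k : ℕ} (c : Fin k → M) (a₀ : M) (θ : L.Formula (Fin k ⊕ Fin 1)) :
    Prop :=
  pSet L c a₀ =
    tpcRealizers L c a₀ ∩ {y | Formula.Realize θ (Sum.elim c fun _ => y)}

/-- The kernel `Ker_{p(M)}(α) = ⋂_{φ ∈ CRF(p)} ε_{φ,Θ}(M, α)`. -/
def KerSet {k : ℕ} (c : Fin k → M) (a₀ : M) (θ : L.Formula (Fin k ⊕ Fin 1)) (α : M) :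
    Set M :=
  ⋂ φ ∈ CRF L c a₀, epsSet L c θ φ α

/-- The formulas of `CRF(p)` strictly smaller than `ψ` on `p`. -/
def SmallerCRF {k : ℕ} (c : Fin k → M) (a₀ : M) (ψ : L.Formula (Fin k ⊕ Fin 2)) :
    Set (L.Formula (Fin k ⊕ Fin 2)) :=
  {φ ∈ CRF L c a₀ | ∃ α ∈ pSet L c a₀,
    phiSet L c φ α ∩ pSet L c a₀ ⊂ phiSet L c ψ α ∩ pSet L c a₀}

/-- The formulas of `CRF(p)` strictly greater than `ψ` on `p`. -/
def LargerCRF {k : ℕ} (c : Fin k → M) (a₀ : M) (ψ : L.Formula (Fin k ⊕ Fin 2)) :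
    Set (L.Formula (Fin k ⊕ Fin 2)) :=
  {φ ∈ CRF L c a₀ | ∃ α ∈ pSet L c a₀,
    phiSet L c ψ α ∩ pSet L c a₀ ⊂ phiSet L c φ α ∩ pSet L c a₀}

/-- `V^ψ_{p(M)}(α)`. -/
def Vpsi {k : ℕ} (c : Fin k → M) (a₀ : M) (θ : L.Formula (Fin k ⊕ Fin 1))
    (ψ : L.Formula (Fin k ⊕ Fin 2)) (α : M) : Set M :=
  ⋃ φ ∈ SmallerCRF L c a₀ ψ, epsSet L c θ φ α

/-- `Ker^ψ_{p(M)}(α)`. -/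
def Kerpsi {k : ℕ} (c : Fin k → M) (a₀ : M) (θ : L.Formula (Fin k ⊕ Fin 1))
    (ψ : L.Formula (Fin k ⊕ Fin 2)) (α : M) : Set M :=
  ⋂ φ ∈ LargerCRF L c a₀ ψ, epsSet L c θ φ α

/-- `φ(x,y)` is equivalence-generating (for convex-to-the-right formulas). -/
def EquivGenR {k : ℕ} (c : Fin k → M) (a₀ : M) (φ : L.Formula (Fin k ⊕ Fin 2)) : Prop :=
  ∀ α ∈ pSet L c a₀, ∀ β ∈ phiSet L c φ α ∩ pSet L c a₀,
    ∀ y : M, β ≤ y → (y ∈ phiSet L c φ α ↔ y ∈ phiSet L c φ β)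

/-- `φ(x,y)` is equivalence-generating (for convex-to-the-left formulas). -/
def EquivGenL {k : ℕ} (c : Fin k → M) (a₀ : M) (φ : L.Formula (Fin k ⊕ Fin 2)) : Prop :=
  ∀ α ∈ pSet L c a₀, ∀ β ∈ phiSet L c φ α ∩ pSet L c a₀,
    ∀ y : M, y ≤ β → (y ∈ phiSet L c φ α ↔ y ∈ phiSet L c φ β)

/-- The relation defined by the formula `E(x, y, b̄)` over parameters `c`. -/
def Erel {k m : ℕ} (c : Fin k → M) (E : L.Formula (Fin k ⊕ (Fin 2 ⊕ Fin m)))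
    (b : Fin m → M) (x y : M) : Prop :=
  Formula.Realize E (Sum.elim c (Sum.elim ![x, y] b))

/-- `r` is an equivalence relation on `P`. -/
def IsEquivOn {M : Type w} (r : M → M → Prop) (P : Set M) : Prop :=
  (∀ x ∈ P, r x x) ∧ (∀ x ∈ P, ∀ y ∈ P, r x y → r y x) ∧
    (∀ x ∈ P, ∀ y ∈ P, ∀ z ∈ P, r x y → r y z → r x z)

/-- The `r`-classes are convex in `P`. -/
def ClassesConvexIn {M : Type w} [LinearOrder M] (r : M → M → Prop) (P : Set M) : Prop :=
  ∀ x ∈ P, ConvexIn {y | y ∈ P ∧ r x y} P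

/-- The `r`-classes are mutually dense in `P`. -/
def ClassesMutuallyDense {M : Type w} [LinearOrder M] (r : M → M → Prop) (P : Set M) :
    Prop :=
  ∀ x ∈ P, ∀ y ∈ P, ¬ r x y →
    ∀ u ∈ P, ∀ v ∈ P, r x u → r x v → u < v → ∃ w ∈ P, r y w ∧ u < w ∧ w < v

/-- Every `r`-class is partitioned into infinitely many infinite `r'`-classes. -/
def RefinedIntoInfinitelyMany {M : Type w} (r r' : M → M → Prop) (P : Set M) : Prop :=
  (∀ x ∈ P, ∀ y ∈ P, r' x y → r x y) ∧
  (∀ x ∈ P, ∀ y ∈ P, r x y → {z | z ∈ P ∧ r' y z}.Infinite) ∧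
  ∀ x ∈ P, {C : Set M | ∃ y, y ∈ P ∧ r x y ∧ C = {z | z ∈ P ∧ r' y z}}.Infinite

/-- The Restriction on the (linearly ordered) theory of `M`. -/
def SatisfiesRestriction (M : Type w) [L.Structure M] [LinearOrder M] : Prop :=
  ∀ (k : ℕ) (c : Fin k → M) (a₀ : M),
    (∀ (m : ℕ) (E : L.Formula (Fin k ⊕ (Fin 2 ⊕ Fin m))) (bs : ℕ → Fin m → M),
        ¬ ∀ i : ℕ,
            IsEquivOn (Erel L c E (bs i)) (pSet L c a₀) ∧
            ClassesConvexIn (Erel L c E (bs i)) (pSet L c a₀) ∧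
            ClassesMutuallyDense (Erel L c E (bs i)) (pSet L c a₀) ∧
            RefinedIntoInfinitelyMany (Erel L c E (bs i)) (Erel L c E (bs (i + 1)))
              (pSet L c a₀)) ∧
    {q : Set (L.Formula (Fin k ⊕ Fin 1)) | ∃ y : M,
      tpc L c y = tpc L c a₀ ∧ q = tp1 L c y}.Finite ∧
    ∀ φ : L.Formula (Fin k ⊕ Fin 2),
      (PPreserving L c a₀ φ → ConvexRight L c a₀ φ → EquivGenR L c a₀ φ) ∧
      (PPreserving L c a₀ φ → ConvexLeft L c a₀ φ → EquivGenL L c a₀ φ)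

/-- `M₀` is a prime model (of the complete theory of `M`) over the finite tuple `xs`:
it is a countable atomic elementary substructure of `M` containing `xs`. -/
def IsPrimeOver (M₀ : L.ElementarySubstructure M) {r : ℕ} (xs : Fin r → M) : Prop :=
  (∀ i, xs i ∈ M₀) ∧ Countable M₀ ∧
    ∀ (n : ℕ) (a : Fin n → M₀), IsPrincipalT L xs (fun i => (a i : M))

/-- The 1-type `p = tp(a₀/c)` is extremely trivial. -/
def ExtremelyTrivial {k : ℕ} (c : Fin k → M) (a₀ : M) : Prop :=
  ∀ n : ℕ, 1 ≤ n → ∀ βs : Fin n → M, (∀ i, βs i ∈ pSet L c a₀) →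
    ∀ M₀ : L.ElementarySubstructure M, IsPrimeOver L M₀ (Fin.append c βs) →
      {y | y ∈ pSet L c a₀ ∧ y ∈ M₀} = Set.range βs

end Ordered

section AuxProof

open Filter

variable {L : FirstOrder.Language.{u, v}}

/-- The ultrapower of `M` along the hyperfilter on `ℕ`. -/
abbrev Ultrapower (M : Type w) [L.Structure M] : Type w :=
  Filter.Product (↑(Filter.hyperfilter ℕ) : Filter ℕ) (fun _ : ℕ => M)

variable {M : Type w} [L.Structure M] [Nonempty M]

/-- The diagonal elementary embedding into the ultrapower. -/
noncomputable def diagEmb (L : FirstOrder.Language.{u, v}) (M : Type w) [L.Structure M]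
    [Nonempty M] : M ↪ₑ[L] (Ultrapower (L := L) M) where
  toFun m := (↑(fun _ : ℕ => m) : Ultrapower (L := L) M)
  map_formula' := by
    intro n φ xv
    have h := Ultraproduct.realize_formula_cast (u := Filter.hyperfilter ℕ)
      (M := fun _ : ℕ => M) φ (fun i _ => xv i)
    simp only [Filter.eventually_const] at h
    exact h

lemma forall_fun_fin1 {α : Type*} {P : (Fin 1 → α) → Prop} :
    (∀ i : Fin 1 → α, P i) ↔ ∀ z : α, P fun _ => z :=
  ⟨fun h z => h _, fun h i => by
    have hi : i = fun _ => i 0 := funext fun t => by rw [Subsingleton.elim t 0]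
    rw [hi]; exact h (i 0)⟩

lemma realize_iAlls_imp_iff {K : Type x} [L.Structure K] {β : Type y}
    [Finite β] (cc : β → K) (ψ θ : L.Formula (β ⊕ Fin 1)) :
    ((ψ.imp θ).iAlls (Fin 1)).Realize cc ↔
      ∀ z : K, ψ.Realize (Sum.elim cc fun _ => z) → θ.Realize (Sum.elim cc fun _ => z) := by
  rw [Formula.realize_iAlls]
  constructor
  · intro hh z
    have := hh (fun _ => z)
    rwa [Formula.realize_imp] at this
  · intro hh i
    have hi : i = fun _ => i 0 := funext fun t => by rw [Subsingleton.elim t 0]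
    rw [hi, Formula.realize_imp]
    exact hh (i 0)

set_option linter.unusedSectionVars false in
lemma all_transfer {N : Type x} [L.Structure N] (f : M ↪ₑ[L] N) {β : Type y} [Finite β]
    (c : β → M) (c' : β → N) (hc' : ∀ t, c' t = f (c t)) (ψ θ : L.Formula (β ⊕ Fin 1))
    (hM : ∀ z : M, ψ.Realize (Sum.elim c fun _ => z) → θ.Realize (Sum.elim c fun _ => z)) :
    ∀ z : N, ψ.Realize (Sum.elim c' fun _ => z) → θ.Realize (Sum.elim c' fun _ => z) := by
  have hcc : c' = f ∘ c := funext hc'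
  rw [hcc]
  have h2 := (realize_iAlls_imp_iff c ψ θ).2 hM
  have h3 := (f.map_formula ((ψ.imp θ).iAlls (Fin 1)) c).2 h2
  exact (realize_iAlls_imp_iff (f ∘ c) ψ θ).1 h3

lemma decisive_transfer {N : Type x} [L.Structure N] (f : M ↪ₑ[L] N) {β : Type y} [Finite β]
    (c : β → M) (c' : β → N) (hc' : ∀ t, c' t = f (c t)) (ψ θ : L.Formula (β ⊕ Fin 1))
    (h : (∀ z : M, ψ.Realize (Sum.elim c fun _ => z) → θ.Realize (Sum.elim c fun _ => z)) ∨
         (∀ z : M, ψ.Realize (Sum.elim c fun _ => z) → ¬θ.Realize (Sum.elim c fun _ => z))) :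
    (∀ z : N, ψ.Realize (Sum.elim c' fun _ => z) → θ.Realize (Sum.elim c' fun _ => z)) ∨
    (∀ z : N, ψ.Realize (Sum.elim c' fun _ => z) → ¬θ.Realize (Sum.elim c' fun _ => z)) := by
  rcases h with h | h
  · exact Or.inl (all_transfer f c c' hc' ψ θ h)
  · refine Or.inr fun z hz hθ => ?_
    have := all_transfer f c c' hc' ψ θ.not
      (fun z hz => Formula.realize_not.2 (h z hz)) z hz
    exact Formula.realize_not.1 this hθ

/-- The standard valuation of a formula over `b₁,…,b_i,d̄` at `y`. -/
def pval {K : Type x} {m : ℕ} (bb : ℕ → K) (dd : Fin m → K) (i : ℕ) (y : K) :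
    ((Fin i ⊕ Fin m) ⊕ Fin 1) → K :=
  Sum.elim (Sum.elim (fun t => bb t.val) dd) fun _ => y

lemma pval_lift {K : Type x} {m : ℕ} (bb : ℕ → K) (dd : Fin m → K) (i : ℕ) (y : K) :
    pval bb dd (i + 1) y ∘ (Sum.map (Sum.map Fin.castSucc id) id) = pval bb dd i y := by
  funext t
  rcases t with t | t
  · rcases t with t | t <;> rfl
  · rfl

lemma pval_cast {K : Type x} {m : ℕ} (bb : ℕ → K) (dd : Fin m → K) {i i' : ℕ} (hii : i' = i)
    (y : K) :
    pval bb dd i y ∘ (Sum.map (Sum.map (Fin.cast hii) id) id) = pval bb dd i' y := by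
  funext t
  rcases t with t | t
  · rcases t with t | t <;> rfl
  · rfl

lemma pval_map {K : Type x} {K' : Type y} {m : ℕ} (f : K → K') (bb : ℕ → K) (dd : Fin m → K)
    (i : ℕ) (y : K) : f ∘ pval bb dd i y = pval (f ∘ bb) (f ∘ dd) i (f y) := by
  funext t
  rcases t with t | t
  · rcases t with t | t <;> rfl
  · rfl

lemma not_countable_nat_bool : ¬ Countable (ℕ → Bool) := by
  classical
  intro hcb
  have hinj : Function.Injective (fun s : Set ℕ => (fun nn => decide (nn ∈ s) : ℕ → Bool)) := by
    intro s t hst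
    ext nn
    have := congrFun hst nn
    simpa using this
  have : Countable (Set ℕ) := hinj.countable
  obtain ⟨f, hf⟩ := Countable.exists_injective_nat (Set ℕ)
  exact Function.cantor_injective f hf


set_option linter.unusedSectionVars false in
set_option maxHeartbeats 1000000 in
lemma exists_decisive (hsmall : IsSmall L (L.completeTheory M)) {β : Type} [Fintype β]
    (c : β → M) (χ : L.Formula (β ⊕ Fin 1))
    (hχ : ∃ z : M, χ.Realize (Sum.elim c fun _ => z)) :
    ∃ ψ : L.Formula (β ⊕ Fin 1),
      (∃ z : M, ψ.Realize (Sum.elim c fun _ => z)) ∧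
      (∀ z : M, ψ.Realize (Sum.elim c fun _ => z) → χ.Realize (Sum.elim c fun _ => z)) ∧
      ∀ θ : L.Formula (β ⊕ Fin 1),
        (∀ z : M, ψ.Realize (Sum.elim c fun _ => z) → θ.Realize (Sum.elim c fun _ => z)) ∨
        (∀ z : M, ψ.Realize (Sum.elim c fun _ => z) → ¬θ.Realize (Sum.elim c fun _ => z)) := by
  classical
  by_contra hno
  set T := L.completeTheory M with hT
  set Con : L.Formula (β ⊕ Fin 1) → Prop :=
    fun ψ => ∃ z : M, ψ.Realize (Sum.elim c fun _ => z) with hCon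
  set Imp : L.Formula (β ⊕ Fin 1) → L.Formula (β ⊕ Fin 1) → Prop :=
    fun ψ θ => ∀ z : M, ψ.Realize (Sum.elim c fun _ => z) → θ.Realize (Sum.elim c fun _ => z)
    with hImp
  -- every consistent formula below χ splits
  have hsplit : ∀ ψ, Con ψ → Imp ψ χ → ∃ θ, Con (ψ ⊓ θ) ∧ Con (ψ ⊓ θ.not) := by
    intro ψ h1 h2
    by_contra hbad
    push_neg at hbad
    refine hno ⟨ψ, h1, h2, fun θ => ?_⟩
    by_cases hcθ : Con (ψ ⊓ θ)
    · refine Or.inl fun z hz => ?_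
      by_contra hzθ
      exact hbad θ hcθ ⟨z, (Formula.realize_inf).2 ⟨hz, Formula.realize_not.2 hzθ⟩⟩
    · refine Or.inr fun z hz hzθ => ?_
      exact hcθ ⟨z, (Formula.realize_inf).2 ⟨hz, hzθ⟩⟩
  have hsplit' : ∀ ψ : L.Formula (β ⊕ Fin 1),
      ∃ θ, (Con ψ ∧ Imp ψ χ) → Con (ψ ⊓ θ) ∧ Con (ψ ⊓ θ.not) := by
    intro ψ
    by_cases h : Con ψ ∧ Imp ψ χ
    · obtain ⟨θ, ht⟩ := hsplit ψ h.1 h.2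
      exact ⟨θ, fun _ => ht⟩
    · exact ⟨χ, fun h' => absurd h' h⟩
  choose sel hsel using hsplit'
  set step : L.Formula (β ⊕ Fin 1) → Bool → L.Formula (β ⊕ Fin 1) :=
    fun ψ bb => if bb then ψ ⊓ sel ψ else ψ ⊓ (sel ψ).not with hstep
  set F : (ℕ → Bool) → ℕ → L.Formula (β ⊕ Fin 1) :=
    fun g j => Nat.rec χ (fun j' ih => step ih (g j')) j with hF
  have hF0 : ∀ g, F g 0 = χ := fun g => rfl
  have hFsucc : ∀ g j, F g (j + 1) = step (F g j) (g j) := fun g j => rfl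
  -- every node is consistent and below χ
  have hgood : ∀ g j, Con (F g j) ∧ Imp (F g j) χ := by
    intro g j
    induction j with
    | zero => exact ⟨hχ, fun z hz => hz⟩
    | succ j ih =>
      have hs := hsel (F g j) ih
      rw [hFsucc g j, hstep]
      cases hgj : g j
      · simp only [if_neg Bool.false_ne_true]
        exact ⟨hs.2, fun z hz => ih.2 z ((Formula.realize_inf).1 hz).1⟩
      · simp only [if_pos rfl]
        exact ⟨hs.1, fun z hz => ih.2 z ((Formula.realize_inf).1 hz).1⟩
  -- nodes only depend on earlier bits
  have hagree : ∀ g g' j, (∀ t, t < j → g t = g' t) → F g j = F g' j := by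
    intro g g' j
    induction j with
    | zero => intro _; rfl
    | succ j ih =>
      intro hlt
      rw [hFsucc, hFsucc, ih (fun t ht => hlt t (Nat.lt_succ_of_lt ht)),
        hlt j (Nat.lt_succ_self j)]
  -- going down one step (in any structure)
  have hdown : ∀ {K : Type w} [L.Structure K], ∀ (v : (β ⊕ Fin 1) → K) (g : ℕ → Bool) (j : ℕ),
      (F g (j + 1)).Realize v → (F g j).Realize v := by
    intro K _ v g j hr
    rw [hFsucc, hstep] at hr
    cases hgj : g j <;> rw [hgj] at hr
    · simp only [if_neg Bool.false_ne_true] at hr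
      exact ((Formula.realize_inf).1 hr).1
    · simp only [if_pos rfl] at hr
      exact ((Formula.realize_inf).1 hr).1
  have hmono : ∀ {K : Type w} [L.Structure K], ∀ (v : (β ⊕ Fin 1) → K) (g : ℕ → Bool)
      (j₀ j : ℕ), j₀ ≤ j → (F g j).Realize v → (F g j₀).Realize v := by
    intro K _ v g j₀ j hle
    induction j, hle using Nat.le_induction with
    | base => exact id
    | succ j hle ih => exact fun hr => ih (hdown v g j hr)
  -- incompatibility at the first disagreement
  have hinc : ∀ {K : Type w} [L.Structure K], ∀ (v : (β ⊕ Fin 1) → K) (g g' : ℕ → Bool)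
      (j : ℕ), g j ≠ g' j →
      (F g j).Realize v → ¬ ((step (F g j) (g j)).Realize v ∧ (step (F g j) (g' j)).Realize v) := by
    intro K _ v g g' j hne _ ⟨h1, h2⟩
    rw [hstep] at h1 h2
    cases hgj : g j <;> rw [hgj] at h1 <;>
      have hg'j : g' j = !(g j) := by
        cases hgj' : g' j <;> cases hgj'' : g j <;> simp_all
    · rw [hg'j, hgj] at h2
      simp only [Bool.not_false, if_pos rfl] at h2
      simp only [if_neg Bool.false_ne_true] at h1
      exact Formula.realize_not.1 ((Formula.realize_inf).1 h1).2 ((Formula.realize_inf).1 h2).2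
    · rw [hg'j, hgj] at h2
      simp only [Bool.not_true, if_neg Bool.false_ne_true] at h2
      simp only [if_pos rfl] at h1
      exact Formula.realize_not.1 ((Formula.realize_inf).1 h2).2 ((Formula.realize_inf).1 h1).2
  -- realize each branch in the ultrapower
  choose yy hyy using fun g j => (hgood g j).1
  haveI : (T.Model (Ultrapower (L := L) M)) :=
    ((diagEmb L M).theory_model_iff T).1 inferInstance
  set astar : (ℕ → Bool) → Ultrapower (L := L) M := fun g => (↑(yy g) : Ultrapower (L := L) M)
    with hastar
  have hrealize : ∀ g j₀, (F g j₀).Realize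
      (Sum.elim ((diagEmb L M) ∘ c) fun _ => astar g) := by
    intro g j₀
    have hcast := Ultraproduct.realize_formula_cast (u := Filter.hyperfilter ℕ)
      (M := fun _ : ℕ => M) (F g j₀) ((Sum.elim (fun i _ => c i) (fun _ => yy g) : (β ⊕ Fin 1) → ℕ → M))
    have hv : (fun idx => (↑((Sum.elim (fun i _ => c i) (fun _ => yy g) :
          (β ⊕ Fin 1) → ℕ → M) idx) :
        Ultrapower (L := L) M)) = Sum.elim ((diagEmb L M) ∘ c) fun _ => astar g := by
      funext idx
      rcases idx with t | t <;> rfl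
    rw [hv] at hcast
    refine hcast.2 ?_
    have hev : ∀ᶠ j in (↑(Filter.hyperfilter ℕ) : Filter ℕ), j₀ ≤ j :=
      Nat.hyperfilter_le_atTop (Filter.eventually_ge_atTop j₀)
    refine hev.mono fun j hj => ?_
    have hvj : (fun idx => (Sum.elim (fun i _ => c i) (fun _ => yy g) :
          (β ⊕ Fin 1) → ℕ → M) idx j) =
        Sum.elim c fun _ => yy g j := by
      funext idx
      rcases idx with t | t <;> rfl
    rw [hvj]
    exact hmono _ g j₀ j hj (hyy g j)
  -- the complete types
  set k : ℕ := Fintype.card β with hk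
  set E : (β ⊕ Fin 1) ≃ Fin (k + 1) :=
    (Equiv.sumCongr (Fintype.equivFin β) (Equiv.refl (Fin 1))).trans finSumFinEquiv with hE
  set Q : (ℕ → Bool) → T.CompleteType (Fin (k + 1)) := fun g =>
    T.typeOf ((Sum.elim ((diagEmb L M) ∘ c) fun _ => astar g) ∘ E.symm) with hQ
  have hmemQ : ∀ g j, Formula.equivSentence ((F g j).relabel ⇑E) ∈ Q g := by
    intro g j
    rw [hQ]
    refine (Theory.CompleteType.formula_mem_typeOf).2 ?_
    rw [Formula.realize_relabel]
    have : ((Sum.elim ((diagEmb L M) ∘ c) fun _ => astar g) ∘ ⇑E.symm) ∘ ⇑E =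
        Sum.elim ((diagEmb L M) ∘ c) fun _ => astar g := by
      funext t
      simp [Function.comp, Equiv.symm_apply_apply]
    rw [this]
    exact hrealize g j
  have hQinj : Function.Injective Q := by
    intro g g' hQeq
    by_contra hne
    have hex : ∃ t, g t ≠ g' t := by
      by_contra hax
      push_neg at hax
      exact hne (funext hax)
    set j := Nat.find hex with hj
    have hjne : g j ≠ g' j := Nat.find_spec hex
    have hjlt : ∀ t, t < j → g t = g' t := fun t ht => not_not.1 (Nat.find_min hex ht)
    have hFeq : F g j = F g' j := hagree g g' j hjlt
    have h1 : ((F g (j + 1)).relabel ⇑E).Realize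
        ((Sum.elim ((diagEmb L M) ∘ c) fun _ => astar g) ∘ ⇑E.symm) :=
      (Theory.CompleteType.formula_mem_typeOf).1 (hmemQ g (j + 1))
    have h2' : Formula.equivSentence ((F g' (j + 1)).relabel ⇑E) ∈ Q g := by
      rw [hQeq]; exact hmemQ g' (j + 1)
    have h2 : ((F g' (j + 1)).relabel ⇑E).Realize
        ((Sum.elim ((diagEmb L M) ∘ c) fun _ => astar g) ∘ ⇑E.symm) :=
      (Theory.CompleteType.formula_mem_typeOf).1 h2'
    rw [Formula.realize_relabel] at h1 h2
    have hEv : ((Sum.elim ((diagEmb L M) ∘ c) fun _ => astar g) ∘ ⇑E.symm) ∘ ⇑E =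
        Sum.elim ((diagEmb L M) ∘ c) fun _ => astar g := by
      funext t
      simp [Function.comp, Equiv.symm_apply_apply]
    rw [hEv] at h1 h2
    rw [hFsucc] at h1 h2
    rw [← hFeq] at h2
    exact hinc _ g g' j hjne
      (hdown _ g j (by rw [hFsucc]; exact h1)) ⟨h1, h2⟩
  haveI : Countable (T.CompleteType (Fin (k + 1))) := hsmall (k + 1)
  exact not_countable_nat_bool hQinj.countable


end AuxProof

/-- Lemma 1. Let `T = Th(M)` be a small countable complete theory,
`D = range d` a finite and `B = range b` a countable subset of the model `M`. Every
satisfiable `(B ∪ D)`-formula `φ(x, b̄ₙ, d̄)` belongs to a complete 1-type `q` over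
`B ∪ D` (given here by the type of a realization `a` in an elementary extension `N`)
whose restriction to `Bᵢ ∪ D` is principal for every `i ≥ n`. -/
theorem statement_0 {L : FirstOrder.Language.{u, v}} (hL : Countable L.Symbols)
    {M : Type w} [L.Structure M] [Nonempty M]
    (hsmall : IsSmall L (L.completeTheory M))
    {m : ℕ} (d : Fin m → M) (b : ℕ → M)
    (n : ℕ) (φ : L.Formula ((Fin n ⊕ Fin m) ⊕ Fin 1))
    (hsat : ∃ y : M,
      Formula.Realize φ (Sum.elim (Sum.elim (fun i : Fin n => b i.val) d) fun _ => y)) :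
    ∃ (N : Theory.ModelType.{u, v, max u v w} (L.completeTheory M))
      (h : M ↪ₑ[L] N) (a : N),
      Formula.Realize φ
        (Sum.elim (Sum.elim (fun i : Fin n => h (b i.val)) (fun j => h (d j)))
          fun _ => a) ∧
      ∀ i : ℕ, n ≤ i →
        IsPrincipal1 L
          (Sum.elim (fun j : Fin i => h (b j.val)) (fun j => h (d j)) :
            (Fin i ⊕ Fin m) → N) a := by
  classical
  set T := L.completeTheory M with hT
  -- base decisive formula over b₁,…,b_n,d̄
  obtain ⟨ψ₀, hψ₀con, hψ₀imp, hψ₀dec⟩ := exists_decisive (M := M) hsmall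
    (Sum.elim (fun i : Fin n => b i.val) d) φ hsat
  -- the recursive refinement step
  have hstepex : ∀ (i : ℕ) (ψ : L.Formula ((Fin i ⊕ Fin m) ⊕ Fin 1)),
      ∃ ψ' : L.Formula ((Fin (i + 1) ⊕ Fin m) ⊕ Fin 1),
        (∃ z : M, ψ.Realize (pval b d i z)) →
        ((∃ z : M, ψ'.Realize (pval b d (i + 1) z)) ∧
          (∀ θ : L.Formula ((Fin (i + 1) ⊕ Fin m) ⊕ Fin 1),
            (∀ z : M, ψ'.Realize (pval b d (i + 1) z) → θ.Realize (pval b d (i + 1) z)) ∨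
            (∀ z : M, ψ'.Realize (pval b d (i + 1) z) → ¬θ.Realize (pval b d (i + 1) z))) ∧
          ∀ z : M, ψ'.Realize (pval b d (i + 1) z) → ψ.Realize (pval b d i z)) := by
    intro i ψ
    by_cases hcon : ∃ z : M, ψ.Realize (pval b d i z)
    · have hliftreal : ∀ {K : Type w} [L.Structure K] (bb : ℕ → K) (dd : Fin m → K) (z : K),
          (ψ.relabel (Sum.map (Sum.map Fin.castSucc id) id :
              ((Fin i ⊕ Fin m) ⊕ Fin 1) → ((Fin (i + 1) ⊕ Fin m) ⊕ Fin 1))).Realize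
            (pval bb dd (i + 1) z) ↔ ψ.Realize (pval bb dd i z) := by
        intro K _ bb dd z
        rw [Formula.realize_relabel, pval_lift]
      obtain ⟨z, hz⟩ := hcon
      have hzl : (ψ.relabel (Sum.map (Sum.map Fin.castSucc id) id :
          ((Fin i ⊕ Fin m) ⊕ Fin 1) → ((Fin (i + 1) ⊕ Fin m) ⊕ Fin 1))).Realize
          (pval b d (i + 1) z) := (hliftreal (K := M) b d z).2 hz
      obtain ⟨ψ', h1, h2, h3⟩ := exists_decisive (M := M) hsmall
        (Sum.elim (fun t : Fin (i + 1) => b t.val) d)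
        (ψ.relabel (Sum.map (Sum.map Fin.castSucc id) id)) ⟨z, hzl⟩
      refine ⟨ψ', fun _ => ⟨h1, h3, fun z' hz'' => ?_⟩⟩
      have hz2 : (ψ.relabel (Sum.map (Sum.map Fin.castSucc id) id :
          ((Fin i ⊕ Fin m) ⊕ Fin 1) → ((Fin (i + 1) ⊕ Fin m) ⊕ Fin 1))).Realize
          (pval b d (i + 1) z') := h2 z' hz''
      exact (hliftreal (K := M) b d z').1 hz2
    · exact ⟨⊥, fun hc => absurd hc hcon⟩
  choose nxt hnxt using hstepex
  set Ψ : ∀ j : ℕ, L.Formula ((Fin (n + j) ⊕ Fin m) ⊕ Fin 1) :=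
    fun j => Nat.rec ψ₀ (fun j' ih => nxt (n + j') ih) j with hΨdef
  have hΨcon : ∀ j, ∃ z : M, (Ψ j).Realize (pval b d (n + j) z) := by
    intro j
    induction j with
    | zero => exact hψ₀con
    | succ j ih => exact ((hnxt (n + j) (Ψ j)) ih).1
  have hΨdec : ∀ (j : ℕ) (θ : L.Formula ((Fin (n + j) ⊕ Fin m) ⊕ Fin 1)),
      (∀ z : M, (Ψ j).Realize (pval b d (n + j) z) → θ.Realize (pval b d (n + j) z)) ∨
      (∀ z : M, (Ψ j).Realize (pval b d (n + j) z) → ¬θ.Realize (pval b d (n + j) z)) := by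
    intro j
    cases j with
    | zero => exact hψ₀dec
    | succ j => exact ((hnxt (n + j) (Ψ j)) (hΨcon j)).2.1
  have hΨchain : ∀ (j : ℕ) (z : M), (Ψ (j + 1)).Realize (pval b d (n + (j + 1)) z) →
      (Ψ j).Realize (pval b d (n + j) z) :=
    fun j => ((hnxt (n + j) (Ψ j)) (hΨcon j)).2.2
  have hΨmono : ∀ j₀ j, j₀ ≤ j → ∀ z : M, (Ψ j).Realize (pval b d (n + j) z) →
      (Ψ j₀).Realize (pval b d (n + j₀) z) := by
    intro j₀ j hle
    induction j, hle using Nat.le_induction with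
    | base => exact fun z => id
    | succ j hle ih => exact fun z hz => ih z (hΨchain j z hz)
  -- the realizer in the ultrapower
  choose ys hys using hΨcon
  haveI : (Ultrapower (L := L) M) ⊨ T := ((diagEmb L M).theory_model_iff T).1 inferInstance
  set a₀ : Ultrapower (L := L) M := (↑ys : Ultrapower (L := L) M) with ha₀
  have hA₀ : ∀ j₀, (Ψ j₀).Realize
      (pval ((diagEmb L M) ∘ b) ((diagEmb L M) ∘ d) (n + j₀) a₀) := by
    intro j₀
    have hcast := Ultraproduct.realize_formula_cast (u := Filter.hyperfilter ℕ)
      (M := fun _ : ℕ => M) (Ψ j₀)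
      ((Sum.elim (Sum.elim (fun t _ => b t.val) (fun s _ => d s)) (fun _ => ys) :
        ((Fin (n + j₀) ⊕ Fin m) ⊕ Fin 1) → ℕ → M))
    have hv : (fun idx => (↑((Sum.elim (Sum.elim (fun t _ => b t.val) (fun s _ => d s))
          (fun _ => ys) : ((Fin (n + j₀) ⊕ Fin m) ⊕ Fin 1) → ℕ → M) idx) :
        Ultrapower (L := L) M)) =
        pval ((diagEmb L M) ∘ b) ((diagEmb L M) ∘ d) (n + j₀) a₀ := by
      funext idx
      rcases idx with t | t
      · rcases t with t | t <;> rfl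
      · rfl
    rw [hv] at hcast
    refine hcast.2 ?_
    have hev : ∀ᶠ j in (↑(Filter.hyperfilter ℕ) : Filter ℕ), j₀ ≤ j :=
      Nat.hyperfilter_le_atTop (Filter.eventually_ge_atTop j₀)
    refine hev.mono fun j hj => ?_
    have hvj : (fun idx => (Sum.elim (Sum.elim (fun t _ => b t.val) (fun s _ => d s))
          (fun _ => ys) : ((Fin (n + j₀) ⊕ Fin m) ⊕ Fin 1) → ℕ → M) idx j) =
        pval b d (n + j₀) (ys j) := by
      funext idx
      rcases idx with t | t
      · rcases t with t | t <;> rfl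
      · rfl
    rw [hvj]
    exact hΨmono j₀ j hj (ys j) (hys j)
  -- the bundled model in the right universe
  let NN : Type (max u v w) := ULift.{max u v, w} (Ultrapower (L := L) M)
  let eqN : Ultrapower (L := L) M ≃ NN := Equiv.ulift.symm
  letI : L.Structure NN := Equiv.inducedStructure eqN
  let gE : (Ultrapower (L := L) M) ↪ₑ[L] NN :=
    (Equiv.inducedStructureEquiv eqN).toElementaryEmbedding
  let hh : M ↪ₑ[L] NN := gE.comp (diagEmb L M)
  haveI hNne : Nonempty NN := ⟨gE a₀⟩
  haveI hNT : NN ⊨ T := (hh.theory_model_iff T).1 inferInstance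
  have hA : ∀ j₀, (Ψ j₀).Realize (pval (hh ∘ b) (hh ∘ d) (n + j₀) (gE a₀)) := by
    intro j₀
    have hmapped := (gE.map_formula (Ψ j₀)
      (pval ((diagEmb L M) ∘ b) ((diagEmb L M) ∘ d) (n + j₀) a₀)).2 (hA₀ j₀)
    rw [pval_map] at hmapped
    exact hmapped
  refine ⟨⟨NN⟩, hh, gE a₀, ?_, ?_⟩
  · have htr := all_transfer hh (Sum.elim (fun t : Fin n => b t.val) d)
      (Sum.elim (fun t : Fin n => hh (b t.val)) (fun s => hh (d s)))
      (fun t => by rcases t with t | t <;> rfl) ψ₀ φ hψ₀imp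
    exact htr (gE a₀) (hA 0)
  · intro i hni
    have hij : n + (i - n) = i := by omega
    set j := i - n with hjdef
    have hρreal : ∀ {K : Type (max u v w)} [L.Structure K]
        (θ : L.Formula ((Fin (n + j) ⊕ Fin m) ⊕ Fin 1)) (bb : ℕ → K) (dd : Fin m → K) (z : K),
        (θ.relabel (Sum.map (Sum.map (Fin.cast hij) id) id :
            ((Fin (n + j) ⊕ Fin m) ⊕ Fin 1) → ((Fin i ⊕ Fin m) ⊕ Fin 1))).Realize
          (pval bb dd i z) ↔ θ.Realize (pval bb dd (n + j) z) := by
      intro K _ θ bb dd z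
      rw [Formula.realize_relabel, pval_cast]
    have hρ'real : ∀ {K : Type (max u v w)} [L.Structure K]
        (θ : L.Formula ((Fin i ⊕ Fin m) ⊕ Fin 1)) (bb : ℕ → K) (dd : Fin m → K) (z : K),
        (θ.relabel (Sum.map (Sum.map (Fin.cast hij.symm) id) id :
            ((Fin i ⊕ Fin m) ⊕ Fin 1) → ((Fin (n + j) ⊕ Fin m) ⊕ Fin 1))).Realize
          (pval bb dd (n + j) z) ↔ θ.Realize (pval bb dd i z) := by
      intro K _ θ bb dd z
      rw [Formula.realize_relabel, pval_cast]
    refine ⟨(Ψ j).relabel (Sum.map (Sum.map (Fin.cast hij) id) id), ?_, ?_⟩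
    · exact (hρreal (Ψ j) (hh ∘ b) (hh ∘ d) (gE a₀)).2 (hA j)
    · intro a' ha'
      have ha'Ψ : (Ψ j).Realize (pval (hh ∘ b) (hh ∘ d) (n + j) a') :=
        (hρreal (Ψ j) (hh ∘ b) (hh ∘ d) a').1 ha'
      have haΨ : (Ψ j).Realize (pval (hh ∘ b) (hh ∘ d) (n + j) (gE a₀)) := hA j
      ext θ'
      simp only [tp1, Set.mem_setOf_eq]
      have hdecN := decisive_transfer hh (Sum.elim (fun t : Fin (n + j) => b t.val) d)
        (Sum.elim (fun t : Fin (n + j) => hh (b t.val)) (fun s => hh (d s)))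
        (fun t => by rcases t with t | t <;> rfl) (Ψ j)
        (θ'.relabel (Sum.map (Sum.map (Fin.cast hij.symm) id) id))
        (hΨdec j (θ'.relabel (Sum.map (Sum.map (Fin.cast hij.symm) id) id)))
      rcases hdecN with H | H
      · have t1 := (hρ'real θ' (hh ∘ b) (hh ∘ d) (gE a₀)).1 (H (gE a₀) haΨ)
        have t2 := (hρ'real θ' (hh ∘ b) (hh ∘ d) a').1 (H a' ha'Ψ)
        exact iff_of_true t2 t1
      · have t1 := H (gE a₀) haΨ
        have t2 := H a' ha'Ψ
        exact iff_of_false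
          (fun hx => t2 ((hρ'real θ' (hh ∘ b) (hh ∘ d) a').2 hx))
          (fun hx => t1 ((hρ'real θ' (hh ∘ b) (hh ∘ d) (gE a₀)).2 hx))

end Paper
end

section
/- Let M be a countable model of a small countable complete theory T, and let B_1 ⊆ B_2 ⊆ M. Then D(A^{B_1}) ⊆ D(A^{B_2}), i.e. the finite diagram of the model constructed over B_1 is contained in the finite diagram of the model constructed over B_2. -/
namespace Paper

open FirstOrder FirstOrder.Language Set

universe u v w x y

variable (L : FirstOrder.Language.{u, v})

/-- Corollary 1, part 1. If `B₁ ⊆ B₂` are subsets of a countable model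
`M` of a small countable complete theory, then the finite diagram of the constructed
model `A^{B₁}` is contained in that of `A^{B₂}`. -/
theorem statement_2 {L : FirstOrder.Language.{u, v}} (hL : Countable L.Symbols)
    {M : Type w} [L.Structure M] [Nonempty M] (hMc : Countable M)
    (hsmall : IsSmall L (L.completeTheory M))
    (B₁ B₂ : Set M) (h12 : B₁ ⊆ B₂)
    (A₁ : Type x) [L.Structure A₁] (e₁ : B₁ → A₁)
    (A₂ : Type y) [L.Structure A₂] (e₂ : B₂ → A₂)
    (h₁ : IsConstructedOver L (L.completeTheory M) B₁ A₁ e₁)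
    (h₂ : IsConstructedOver L (L.completeTheory M) B₂ A₂ e₂) :
    FinDiagSubset L A₁ A₂ := by
  classical
  obtain ⟨-, -, he₁, hc₁⟩ := h₁
  obtain ⟨-, -, he₂, -⟩ := h₂
  intro n a
  obtain ⟨k, b, -, φ, hφa, hφiso⟩ := hc₁ n a 0 (fun i => i.elim0)
  set c₁ : Fin k → A₁ := fun i => e₁ (b i) with hc₁def
  set c₂ : Fin k → A₂ := fun i => e₂ ⟨(b i : M), h12 (b i).2⟩ with hc₂def
  -- transfer of formulas over ∅ between the tuples c₁ and c₂
  have key : ∀ χ : L.Formula (Fin k),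
      Formula.Realize χ c₁ ↔ Formula.Realize χ c₂ := by
    intro χ
    have t1 := he₁ k χ b
    have t2 := he₂ k χ (fun i => ⟨(b i : M), h12 (b i).2⟩)
    exact t1.symm.trans t2
  -- φ is realized (over c₂) in A₂
  have hex : ∃ a' : Fin n → A₂, Formula.Realize φ (Sum.elim c₂ a') := by
    have h1 : Formula.Realize (φ.iExs (Fin n)) c₁ := by
      rw [Formula.realize_iExs]
      exact ⟨a, hφa⟩
    have h2 := (key _).mp h1
    rw [Formula.realize_iExs] at h2
    exact h2
  obtain ⟨a', ha'⟩ := hex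
  refine ⟨a', ?_⟩
  -- any formula over ∅ satisfied by a is satisfied by a'
  have main : ∀ ψ : L.Formula (Fin n), Formula.Realize ψ a → Formula.Realize ψ a' := by
    intro ψ hψ
    have h1 : Formula.Realize ((φ.imp (ψ.relabel Sum.inr)).iAlls (Fin n)) c₁ := by
      rw [Formula.realize_iAlls]
      intro i hi
      have h3 := hφiso i hi
      have hmem : ψ.relabel Sum.inr ∈ tpT L c₁ a := by
        show Formula.Realize _ _
        rw [Formula.realize_relabel]
        exact hψ
      rw [← h3] at hmem
      exact hmem
    have h2 := (key _).mp h1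
    rw [Formula.realize_iAlls] at h2
    have h4 : Formula.Realize (ψ.relabel (Sum.inr : Fin n → Fin k ⊕ Fin n))
        (Sum.elim c₂ a') := h2 a' ha'
    rw [Formula.realize_relabel] at h4
    exact h4
  ext ψ
  simp only [tp0, Set.mem_setOf_eq]
  constructor
  · exact main ψ
  · intro hψ'
    by_contra hψ
    have := main ψ.not (by rwa [Formula.realize_not])
    rw [Formula.realize_not] at this
    exact this hψ'

end Paper
end

section
/- Let M be a countable model of a small countable complete theory T, and let B_1, B_2 ⊆ M be such that D(B_1) ⊆ D(B_2), where D(B) denotes the dowry of B. Then D(A^{B_1}) ⊆ D(A^{B_2}). -/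
namespace Paper

open FirstOrder FirstOrder.Language Set

universe u v w x y

variable (L : FirstOrder.Language.{u, v})

/-- Corollary 1, part 2. If the dowry of `B₁` is contained in the dowry
of `B₂`, then the finite diagram of the constructed model `A^{B₁}` is contained in that
of `A^{B₂}`. -/
theorem statement_3 {L : FirstOrder.Language.{u, v}} (hL : Countable L.Symbols)
    {M : Type w} [L.Structure M] [Nonempty M] (hMc : Countable M)
    (hsmall : IsSmall L (L.completeTheory M))
    (B₁ B₂ : Set M) (h12 : DowrySubset L B₁ B₂)
    (A₁ : Type x) [L.Structure A₁] (e₁ : B₁ → A₁)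
    (A₂ : Type y) [L.Structure A₂] (e₂ : B₂ → A₂)
    (h₁ : IsConstructedOver L (L.completeTheory M) B₁ A₁ e₁)
    (h₂ : IsConstructedOver L (L.completeTheory M) B₂ A₂ e₂) :
    FinDiagSubset L A₁ A₂ := by
  intro n a
  obtain ⟨-, -, hpe₁, hcon₁⟩ := h₁
  obtain ⟨-, -, hpe₂, -⟩ := h₂
  obtain ⟨k, b, -, φ, hφa, hiso⟩ := hcon₁ n a 0 Fin.elim0
  set c₁ : Fin k → A₁ := fun i => e₁ (b i) with hc₁def
  obtain ⟨b₂, htpb⟩ := h12 k b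
  set c₂ : Fin k → A₂ := fun i => e₂ (b₂ i) with hc₂def
  -- `c₁` and `c₂` have the same type over `∅`
  have hc : ∀ ψ : L.Formula (Fin k), ψ.Realize c₁ ↔ ψ.Realize c₂ := by
    intro ψ
    rw [hc₁def, hc₂def, ← hpe₁ k ψ b, ← hpe₂ k ψ b₂]
    exact iff_of_eq (congrArg (ψ ∈ ·) htpb)
  -- find a realization of the isolating formula over `c₂`
  have hex : ∃ a2 : Fin n → A₂, φ.Realize (Sum.elim c₂ a2) := by
    have h1 : (φ.iExs (Fin n)).Realize c₁ := by
      rw [Formula.realize_iExs]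
      exact ⟨a, hφa⟩
    have h2 := (hc _).mp h1
    rw [Formula.realize_iExs] at h2
    exact h2
  obtain ⟨a2, ha2⟩ := hex
  refine ⟨a2, ?_⟩
  have key : ∀ ψ : L.Formula (Fin n), ψ.Realize a → ψ.Realize a2 := by
    intro ψ hψ
    have hall :
        (((φ.imp (ψ.relabel Sum.inr)).iAlls
          (Fin n)).Realize c₁) := by
      rw [Formula.realize_iAlls]
      intro i
      rw [Formula.realize_imp]
      intro hφi
      have heq := hiso i hφi
      have hmem : (ψ.relabel Sum.inr : L.Formula (Fin k ⊕ Fin n)) ∈ tpT L c₁ a := by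
        show Formula.Realize (ψ.relabel Sum.inr) (Sum.elim c₁ a)
        rw [Formula.realize_relabel]
        exact hψ
      rw [← heq] at hmem
      exact hmem
    have h2 := (hc _).mp hall
    rw [Formula.realize_iAlls] at h2
    have h3 := h2 a2
    rw [Formula.realize_imp] at h3
    have h4 := h3 ha2
    rw [Formula.realize_relabel] at h4
    exact h4
  ext ψ
  constructor
  · exact fun hψ => key ψ hψ
  · intro hψ
    by_contra hna
    have : (Formula.not ψ).Realize a := by
      rw [Formula.realize_not]; exact hna
    have := key _ this
    rw [Formula.realize_not] at this
    exact this hψ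

end Paper
end

section
/- Let T be a small countable complete theory, M ⊨ T, B ⊆ M countable, and suppose there are tuples ā_1, ā_2 and an element c in B such that tp(ā_1) = tp(ā_2) and tp(c ā_1) ≠ tp(d ā_2) for every d ∈ M. Then the model A^B is non-homogeneous. -/
namespace Paper

open FirstOrder FirstOrder.Language Set

universe u v w x y

variable (L : FirstOrder.Language.{u, v})

/-- Corollary 2. If `B` contains tuples `ā₁, ā₂` with the same type and
an element `c` such that no `d ∈ M` satisfies `tp(c ā₁) = tp(d ā₂)`, then the constructed
model `A^B` is non-homogeneous. -/
theorem statement_4 {L : FirstOrder.Language.{u, v}} (hL : Countable L.Symbols)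
    {M : Type w} [L.Structure M] [Nonempty M]
    (hsmall : IsSmall L (L.completeTheory M))
    (B : Set M) (hB : B.Countable)
    {n : ℕ} (a₁ a₂ : Fin n → M) (ha₁ : ∀ i, a₁ i ∈ B) (ha₂ : ∀ i, a₂ i ∈ B)
    (c : M) (hc : c ∈ B)
    (heq : tp0 L a₁ = tp0 L a₂)
    (hneq : ∀ d : M, tp0 L (Fin.snoc a₁ c) ≠ tp0 L (Fin.snoc a₂ d))
    (A : Type x) [L.Structure A] (e : B → A)
    (hA : IsConstructedOver L (L.completeTheory M) B A e) :
    ¬ IsHomogeneous L A := by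
  classical
  intro hhom
  obtain ⟨hcount, hmodel, hpe, hconstr⟩ := hA
  set b₁ : Fin n → B := fun i => ⟨a₁ i, ha₁ i⟩ with hb₁def
  set b₂ : Fin n → B := fun i => ⟨a₂ i, ha₂ i⟩ with hb₂def
  set aA : Fin n → A := fun i => e (b₁ i) with haAdef
  set bA : Fin n → A := fun i => e (b₂ i) with hbAdef
  -- the images have the same type in A
  have htp : tp0 L aA = tp0 L bA := by
    ext χ
    have h1 := hpe n χ b₁
    have h2 := hpe n χ b₂
    have h3 := Set.ext_iff.mp heq χ
    simp only [tp0, Set.mem_setOf_eq] at h3 ⊢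
    exact Iff.trans (Iff.trans h1.symm h3) h2
  obtain ⟨d, hd⟩ := hhom n aA bA htp (e ⟨c, hc⟩)
  -- the type of d over a tuple from B extending b₂ is principal
  obtain ⟨k, b, hext, φ, hφd, hiso⟩ := hconstr 1 (fun _ => d) n b₂
  choose ι hι using hext
  set bM : Fin k → M := fun i => (b i : M) with hbMdef
  set bA' : Fin k → A := fun i => e (b i) with hbA'def
  have hιM : ∀ j, bM (ι j) = a₂ j := fun j => congrArg Subtype.val (hι j)
  have hιA : ∀ j, bA' (ι j) = bA j := fun j => congrArg e (hι j)
  -- transfer the isolating formula to M: find a realization d'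
  have hex : ∃ x : Fin 1 → M, φ.Realize (Sum.elim bM x) := by
    have h1 : (Formula.iExs (Fin 1) φ).Realize bA' := by
      rw [Formula.realize_iExs]
      exact ⟨fun _ => d, hφd⟩
    have h2 := (hpe k (Formula.iExs (Fin 1) φ) b).mpr h1
    rw [Formula.realize_iExs] at h2
    exact h2
  obtain ⟨x, hx⟩ := hex
  set d' : M := x 0 with hd'def
  have hxeq : (fun _ : Fin 1 => d') = x := funext fun i => congrArg x (Subsingleton.elim 0 i)
  have hx' : φ.Realize (Sum.elim bM fun _ => d') := by rw [hxeq]; exact hx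
  -- key transfer: d' in M has the same type over bM as d over bA'
  have fwd : ∀ ψ : L.Formula (Fin k ⊕ Fin 1),
      ψ.Realize (Sum.elim bA' fun _ => d) → ψ.Realize (Sum.elim bM fun _ => d') := by
    intro ψ hψ
    have hall : (Formula.iAlls (Fin 1) (φ.imp ψ)).Realize bA' := by
      rw [Formula.realize_iAlls]
      intro i
      show (φ.imp ψ).Realize (Sum.elim bA' i)
      rw [Formula.realize_imp]
      intro hφi
      have heqty := hiso i hφi
      have hmem : ψ ∈ tpT L bA' (fun _ => d) := hψ
      rw [← heqty] at hmem
      exact hmem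
    have hM := (hpe k (Formula.iAlls (Fin 1) (φ.imp ψ)) b).mpr hall
    rw [Formula.realize_iAlls] at hM
    have := hM (fun _ => d')
    rw [show (fun a => Sum.elim bM (fun _ : Fin 1 => d') a) =
        Sum.elim bM (fun _ : Fin 1 => d') from rfl] at this
    exact (Formula.realize_imp.mp this) hx'
  have key : ∀ ψ : L.Formula (Fin k ⊕ Fin 1),
      ψ.Realize (Sum.elim bM fun _ => d') ↔ ψ.Realize (Sum.elim bA' fun _ => d) := by
    intro ψ
    constructor
    · intro hM
      by_contra hnA
      have := fwd ψ.not (Formula.realize_not.mpr hnA)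
      exact (Formula.realize_not.mp this) hM
    · exact fwd ψ
  -- relabelings
  set σ : Fin n ⊕ Fin 1 → Fin k ⊕ Fin 1 := Sum.map ι id with hσdef
  set τ : Fin (n + 1) → Fin n ⊕ Fin 1 :=
    fun j => Fin.lastCases (Sum.inr 0) Sum.inl j with hτdef
  have hτA : (Sum.elim bA fun _ : Fin 1 => d) ∘ τ = Fin.snoc bA d := by
    funext j
    refine Fin.lastCases ?_ ?_ j
    · simp [hτdef, Fin.snoc_last]
    · intro i
      simp [hτdef, Fin.snoc_castSucc]
  have hτM : (Sum.elim a₂ fun _ : Fin 1 => d') ∘ τ = Fin.snoc a₂ d' := by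
    funext j
    refine Fin.lastCases ?_ ?_ j
    · simp [hτdef, Fin.snoc_last]
    · intro i
      simp [hτdef, Fin.snoc_castSucc]
  have hσM : (Sum.elim bM fun _ : Fin 1 => d') ∘ σ = Sum.elim a₂ fun _ => d' := by
    funext j
    rcases j with j | j
    · simp [hσdef, hιM j]
    · simp [hσdef]
  have hσA : (Sum.elim bA' fun _ : Fin 1 => d) ∘ σ = Sum.elim bA fun _ => d := by
    funext j
    rcases j with j | j
    · simp [hσdef, hιA j]
    · simp [hσdef]
  -- snoc tuples in B
  set bs₁ : Fin (n + 1) → B := Fin.snoc b₁ ⟨c, hc⟩ with hbs₁def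
  have hbs₁M : (fun i => (bs₁ i : M)) = Fin.snoc a₁ c := by
    funext j
    refine Fin.lastCases ?_ ?_ j
    · simp [hbs₁def, Fin.snoc_last]
    · intro i
      simp [hbs₁def, Fin.snoc_castSucc, hb₁def]
  have hbs₁A : (fun i => e (bs₁ i)) = Fin.snoc aA (e ⟨c, hc⟩) := by
    funext j
    refine Fin.lastCases ?_ ?_ j
    · simp [hbs₁def, Fin.snoc_last]
    · intro i
      simp [hbs₁def, Fin.snoc_castSucc, haAdef]
  -- derive the contradiction with hneq d'
  apply hneq d'
  ext χ
  simp only [tp0, Set.mem_setOf_eq]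
  have step1 : χ.Realize (Fin.snoc a₁ c) ↔ χ.Realize (Fin.snoc aA (e ⟨c, hc⟩)) := by
    have := hpe (n + 1) χ bs₁
    rw [hbs₁M, hbs₁A] at this
    exact this
  have step2 : χ.Realize (Fin.snoc aA (e ⟨c, hc⟩)) ↔ χ.Realize (Fin.snoc bA d) := by
    have := Set.ext_iff.mp hd χ
    simpa only [tp0, Set.mem_setOf_eq] using this
  have step3 : χ.Realize (Fin.snoc bA d) ↔
      ((χ.relabel τ).relabel σ).Realize (Sum.elim bA' fun _ => d) := by
    rw [Formula.realize_relabel, hσA, Formula.realize_relabel, hτA]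
  have step4 : ((χ.relabel τ).relabel σ).Realize (Sum.elim bM fun _ => d') ↔
      χ.Realize (Fin.snoc a₂ d') := by
    rw [Formula.realize_relabel, hσM, Formula.realize_relabel, hτM]
  rw [step1, step2, step3, ← key, step4]

end Paper
end
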